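/- For any integer k ≥ 2, the function z ↦ z̄^k / z, extended by 0 at z = 0, is of class C^{k−2} on ℂ (regarded as ℝ²). -/

import Mathlib

open Complex Asymptotics

noncomputable def conjL : ℂ →L[ℝ] ℂ := Complex.conjCLE.toContinuousLinearMap

noncomputable def Phi (A : ℂ →L[ℝ] ℂ) : ℂ →L[ℝ] (ℂ →L[ℝ] ℂ) :=
  (ContinuousLinearMap.id ℝ ℂ).smulRight A

/-- The family of functions `z ↦ z̄^a / z^b` extended by `0`. -/
noncomputable def F (a b : ℕ) : ℂ → ℂ :=
  fun z => if z = 0 then 0 else (starRingEnd ℂ z) ^ a / z ^ b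

lemma F_norm_le (m b : ℕ) (z : ℂ) : ‖F (b + 1 + m) b z‖ ≤ ‖z‖ ^ (m + 1) := by
  by_cases hz : z = 0
  · simp [F, hz]
  · rw [F, if_neg hz, norm_div, norm_pow, norm_pow, RCLike.norm_conj,
      show b + 1 + m = (m + 1) + b by omega, pow_add,
      mul_div_assoc, div_self (pow_ne_zero _ (norm_ne_zero_iff.2 hz)), mul_one]

lemma F_hasFDerivAt_zero (m b : ℕ) :
    HasFDerivAt (F (b + 1 + (m + 1)) b) (0 : ℂ →L[ℝ] ℂ) 0 := by
  rw [hasFDerivAt_iff_isLittleO_nhds_zero]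
  have key : (F (b + 1 + (m + 1)) b) =o[nhds 0] (fun h : ℂ => h) := by
    refine (Asymptotics.isBigO_of_le _ fun z => ?_).trans_isLittleO
      (Asymptotics.isLittleO_norm_pow_id (n := m + 2) (by omega))
    calc ‖F (b + 1 + (m + 1)) b z‖ ≤ ‖z‖ ^ (m + 1 + 1) := F_norm_le (m + 1) b z
      _ = ‖‖z‖ ^ (m + 2)‖ := by rw [Real.norm_of_nonneg (by positivity)]
  have h1 : (fun h : ℂ => F (b + 1 + (m + 1)) b (0 + h) - F (b + 1 + (m + 1)) b 0
      - (0 : ℂ →L[ℝ] ℂ) h) = F (b + 1 + (m + 1)) b := by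
    funext h
    simp [F]
  rw [h1]
  exact key

lemma F_hasFDerivAt (m b : ℕ) (hb : 1 ≤ b) (z : ℂ) :
    HasFDerivAt (F (b + 1 + (m + 1)) b)
      ((-(b : ℂ) * F (b + 1 + (m + 1)) (b + 1) z) • ContinuousLinearMap.id ℝ ℂ
        + (((b : ℂ) + m + 2) * F (b + 1 + m) b z) • conjL) z := by
  obtain ⟨c, rfl⟩ : ∃ c, b = c + 1 := ⟨b - 1, by omega⟩
  by_cases hz : z = 0
  · subst hz
    have h0 := F_hasFDerivAt_zero m (c + 1)
    convert h0 using 1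
    simp only [F, if_true, mul_zero]
    ext w
    simp
  · -- away from 0
    have hconj := HasFDerivAt.comp z
      (((hasDerivAt_pow (c + 1 + 1 + (m + 1)) (starRingEnd ℂ z)).hasFDerivAt).restrictScalars ℝ)
      (Complex.conjCLE.hasFDerivAt (x := z))
    have hinv := (((hasDerivAt_pow (c + 1) z).inv (pow_ne_zero _ hz)).hasFDerivAt).restrictScalars ℝ
    have hmul := hconj.mul hinv
    have heq : F (c + 1 + 1 + (m + 1)) (c + 1) =ᶠ[nhds z]
        (fun x : ℂ => x ^ (c + 1 + 1 + (m + 1))) ∘ (starRingEnd ℂ) * fun y => (y ^ (c + 1))⁻¹ := by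
      filter_upwards [compl_singleton_mem_nhds hz] with w hw
      simp only [Set.mem_compl_iff, Set.mem_singleton_iff] at hw
      simp only [Pi.mul_apply, Function.comp_apply]
      rw [F, if_neg hw, div_eq_mul_inv]
    have hmain := hmul.congr_of_eventuallyEq heq
    refine hmain.congr_fderiv ?_
    ext w
    simp only [ContinuousLinearMap.add_apply, ContinuousLinearMap.smul_apply,
      ContinuousLinearMap.coe_comp', ContinuousLinearMap.coe_restrictScalars',
      Function.comp_apply, ContinuousLinearMap.smulRight_apply, ContinuousLinearMap.toSpanSingleton_apply, ContinuousLinearMap.one_apply,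
      smul_eq_mul, ContinuousLinearMap.coe_id', id_eq, F, if_neg hz, Pi.inv_apply,
      ContinuousLinearEquiv.coe_coe, Complex.conjCLE_apply, Nat.add_sub_cancel, show c + 1 + 1 + (m + 1) - 1 = c + 1 + 1 + m by omega]
    have hcw : conjL w = starRingEnd ℂ w := rfl
    rw [hcw]
    push_cast
    field_simp
    ring

lemma F_continuous (b : ℕ) : Continuous (F (b + 1 + 0) b) := by
  rw [continuous_iff_continuousAt]
  intro z
  by_cases hz : z = 0
  · subst hz
    have h0 : F (b + 1 + 0) b 0 = 0 := by simp [F]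
    rw [ContinuousAt, h0]
    refine squeeze_zero_norm (a := fun w : ℂ => ‖w‖ ^ (0 + 1)) (fun w => ?_) ?_
    · exact F_norm_le 0 b w
    · have : Filter.Tendsto (fun w : ℂ => ‖w‖ ^ (0 + 1)) (nhds 0) (nhds (‖(0 : ℂ)‖ ^ (0 + 1))) :=
        ((continuous_norm.pow _).tendsto 0)
      simpa using this
  · have hc : ContinuousAt (fun w : ℂ => (starRingEnd ℂ w) ^ (b + 1 + 0) / w ^ b) z := by
      exact ContinuousAt.div ((Complex.continuous_conj.pow _).continuousAt)
        ((continuous_pow b).continuousAt) (pow_ne_zero _ hz)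
    refine hc.congr ?_
    filter_upwards [compl_singleton_mem_nhds hz] with w hw
    simp only [Set.mem_compl_iff, Set.mem_singleton_iff] at hw
    rw [F, if_neg hw]

lemma F_contDiff (m : ℕ) : ∀ b : ℕ, 1 ≤ b → ContDiff ℝ (m : ℕ∞) (F (b + 1 + m) b) := by
  induction m with
  | zero =>
    intro b _
    have h := (contDiff_zero (𝕜 := ℝ)).2 (F_continuous b)
    exact_mod_cast h
  | succ m ih =>
    intro b hb
    set G : ℂ → ℂ →L[ℝ] ℂ := fun z =>
      (-(b : ℂ) * F (b + 1 + (m + 1)) (b + 1) z) • ContinuousLinearMap.id ℝ ℂ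
        + (((b : ℂ) + m + 2) * F (b + 1 + m) b z) • conjL with hGdef
    have hG : ∀ z, HasFDerivAt (F (b + 1 + (m + 1)) b) (G z) z := fun z =>
      F_hasFDerivAt m b hb z
    have hdiff : Differentiable ℝ (F (b + 1 + (m + 1)) b) := fun z => (hG z).differentiableAt
    have hfd : fderiv ℝ (F (b + 1 + (m + 1)) b) = G := funext fun z => (hG z).fderiv
    suffices hsuf : ContDiff ℝ ((m : WithTop ℕ∞) + 1) (F (b + 1 + (m + 1)) b) by
      exact_mod_cast hsuf
    rw [contDiff_succ_iff_fderiv]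
    refine ⟨hdiff, ?_, ?_⟩
    · intro h
      exact absurd h (by simp)
    · rw [hfd]
      have ih1 : ContDiff ℝ (m : WithTop ℕ∞) (F (b + 1 + (m + 1)) (b + 1)) := by
        have h := ih (b + 1) (by omega)
        have he : (b + 1) + 1 + m = b + 1 + (m + 1) := by omega
        rw [he] at h
        exact_mod_cast h
      have ih2 : ContDiff ℝ (m : WithTop ℕ∞) (F (b + 1 + m) b) := by
        exact_mod_cast ih b hb
      have hGeq : G = fun z =>
          Phi (ContinuousLinearMap.id ℝ ℂ) (-(b : ℂ) * F (b + 1 + (m + 1)) (b + 1) z)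
            + Phi conjL (((b : ℂ) + m + 2) * F (b + 1 + m) b z) := rfl
      rw [hGeq]
      exact ((Phi (ContinuousLinearMap.id ℝ ℂ)).contDiff.comp
          (contDiff_const.mul ih1)).add
        ((Phi conjL).contDiff.comp (contDiff_const.mul ih2))

theorem conj_pow_div_contDiff (k : ℕ) (hk : 2 ≤ k) :
    ContDiff ℝ ((k - 2 : ℕ) : ℕ∞)
      (fun z : ℂ => if z = 0 then 0 else (starRingEnd ℂ z) ^ k / z) := by
  have h := F_contDiff (k - 2) 1 le_rfl
  have he : 1 + 1 + (k - 2) = k := by omega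
  rw [he] at h
  have hfun : F k 1 = fun z : ℂ => if z = 0 then 0 else (starRingEnd ℂ z) ^ k / z := by
    funext z
    simp only [F, pow_one]
  rw [hfun] at h
  exact h
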